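/- Let H ∈ [0, 1/2) and s > 0, and let θ = θ(s) := arccos((1−2H)·e^{−s} + 2H) ∈ (0, π). Then the improper integral ∫₀ˢ (2H + (1−2H)·e^{−t})/√(1 − (2H + (1−2H)·e^{−t})²) dt converges (the integrand blows up as t → 0⁺) and equals θ + (4H/√(1−4H²))·artanh(√((1+2H)/(1−2H))·tan(θ/2)). -/

import Mathlib

open Real MeasureTheory

/-- The inverse hyperbolic tangent. -/
noncomputable def artanh (x : ℝ) : ℝ := Real.log ((1 + x) / (1 - x)) / 2

lemma my_tan_half_eq {θ : ℝ} (h : Real.cos (θ/2) ≠ 0) :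
    Real.tan (θ/2) = Real.sin θ / (1 + Real.cos θ) := by
  have h1 : Real.sin θ = 2 * Real.sin (θ/2) * Real.cos (θ/2) := by
    rw [← Real.sin_two_mul]; congr 1; ring
  have h2 : 1 + Real.cos θ = 2 * Real.cos (θ/2)^2 := by
    have := Real.cos_two_mul (θ/2)
    rw [show 2*(θ/2) = θ by ring] at this
    linarith
  rw [Real.tan_eq_sin_div_cos, h1, h2]
  field_simp

lemma my_hasDerivAt_artanh {x : ℝ} (h1 : -1 < x) (h2 : x < 1) :
    HasDerivAt _root_.artanh (1 / (1 - x^2)) x := by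
  have hxa : (0:ℝ) < 1 + x := by linarith
  have hxb : (0:ℝ) < 1 - x := by linarith
  have hq : HasDerivAt (fun y : ℝ => (1 + y) / (1 - y)) (2 / (1 - x)^2) x := by
    have ha : HasDerivAt (fun y : ℝ => 1 + y) 1 x := (hasDerivAt_id x).const_add 1
    have hb : HasDerivAt (fun y : ℝ => 1 - y) (-1) x := (hasDerivAt_id x).const_sub 1
    have := ha.div hb hxb.ne'
    exact this.congr_deriv (by field_simp; ring)
  have hpos : (0:ℝ) < (1 + x) / (1 - x) := by positivity
  have hlog := (hq.log hpos.ne').div_const 2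
  have hne : (1:ℝ) - x^2 ≠ 0 := by nlinarith
  exact hlog.congr_deriv (by field_simp; ring)


lemma algA (A w k b d m : ℝ) (hw : w ≠ 0) (h1 : 1 + A ≠ 0) (h2 : A - b ≠ 0)
    (hd : d ≠ 0) (hw2 : w^2 = 1 - A^2) (hkm : k * d = m) :
    1 / (2 * (A - b) / (d * (1 + A))) *
      (k * ((1 / (2 * w) * -(2 * A ^ 1 * -(A - b)) * (1 + A) - w * -(A - b)) / (1 + A) ^ 2))
      = m / (2 * w) := by
  rw [← hkm]
  field_simp
  linear_combination k * hw2

lemma algB (A w m H : ℝ) (hw : w ≠ 0) (hm : m ≠ 0) :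
    -(1 / w) * -(A - 2*H) + 4 * H / m * (m / (2 * w)) = A / w := by
  field_simp
  ring


set_option maxHeartbeats 1000000 in
/-- For `H ∈ [0, 1/2)`, `s > 0` and
`θ = arccos((1−2H)e^{−s} + 2H)`, the improper integral
`∫₀ˢ (2H + (1−2H)e^{−t})/√(1 − (2H + (1−2H)e^{−t})²) dt` converges and equals
`θ + (4H/√(1−4H²))·artanh(√((1+2H)/(1−2H))·tan(θ/2))`. -/
theorem horonduloid_profile_formula
    (H : ℝ) (hH0 : 0 ≤ H) (hH : H < 1 / 2) (s : ℝ) (hs : 0 < s)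
    (θ : ℝ) (hθ : θ = Real.arccos ((1 - 2 * H) * Real.exp (-s) + 2 * H)) :
    IntegrableOn (fun t : ℝ =>
        (2 * H + (1 - 2 * H) * Real.exp (-t)) /
          Real.sqrt (1 - (2 * H + (1 - 2 * H) * Real.exp (-t)) ^ 2)) (Set.Ioc 0 s) ∧
    (∫ t in Set.Ioc (0:ℝ) s,
        (2 * H + (1 - 2 * H) * Real.exp (-t)) /
          Real.sqrt (1 - (2 * H + (1 - 2 * H) * Real.exp (-t)) ^ 2)) =
      θ + (4 * H / Real.sqrt (1 - 4 * H ^ 2)) *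
        _root_.artanh (Real.sqrt ((1 + 2 * H) / (1 - 2 * H)) * Real.tan (θ / 2)) := by
  have hd : (0:ℝ) < 1 - 2 * H := by linarith
  have h2H0 : (0:ℝ) ≤ 2 * H := by linarith
  set k : ℝ := Real.sqrt ((1 + 2*H)/(1 - 2*H)) with hk_def
  set m : ℝ := Real.sqrt (1 - 4*H^2) with hm_def
  have hm2 : m^2 = 1 - 4*H^2 := Real.sq_sqrt (by nlinarith)
  have hm0 : 0 < m := Real.sqrt_pos.2 (by nlinarith)
  have hk2 : k^2 = (1 + 2*H)/(1 - 2*H) := Real.sq_sqrt (by positivity)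
  have hk0 : 0 ≤ k := Real.sqrt_nonneg _
  have hkm : k * m = 1 + 2*H := by
    rw [hk_def, hm_def, ← Real.sqrt_mul (by positivity)]
    rw [show (1 + 2*H)/(1-2*H) * (1 - 4*H^2) = (1+2*H)^2 by field_simp; ring]
    exact Real.sqrt_sq (by linarith)
  set u : ℝ → ℝ := fun t => 2*H + (1 - 2*H) * Real.exp (-t) with hu_def
  set f : ℝ → ℝ := fun t => u t / Real.sqrt (1 - u t ^ 2) with hf_def
  set X : ℝ → ℝ := fun t => k * (Real.sqrt (1 - u t ^ 2) / (1 + u t)) with hX_def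
  set F : ℝ → ℝ := fun t => Real.arccos (u t) + (4*H/m) * _root_.artanh (X t) with hF_def
  -- basic bounds
  have hu_lb : ∀ t : ℝ, 2*H < u t := fun t => by
    have := Real.exp_pos (-t); simp only [hu_def]; nlinarith
  have hu_pos : ∀ t : ℝ, 0 < u t := fun t => lt_of_le_of_lt h2H0 (hu_lb t)
  have hu_ub : ∀ t : ℝ, 0 ≤ t → u t ≤ 1 := fun t ht => by
    have := Real.exp_le_one_iff.2 (neg_nonpos.2 ht)
    simp only [hu_def]; nlinarith
  have hu_lt1 : ∀ t : ℝ, 0 < t → u t < 1 := fun t ht => by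
    have h1 : Real.exp (-t) < 1 := Real.exp_lt_one_iff.2 (by linarith)
    have := Real.exp_pos (-t)
    simp only [hu_def]; nlinarith
  have hden_pos : ∀ t : ℝ, 0 < 1 + u t := fun t => by linarith [hu_pos t]
  have hX_nonneg : ∀ t : ℝ, 0 ≤ X t := fun t => by
    have := Real.sqrt_nonneg (1 - u t ^ 2)
    have := hden_pos t
    simp only [hX_def]; positivity
  have hX_lt1 : ∀ t : ℝ, 0 ≤ t → X t < 1 := by
    intro t ht
    have hsq : (Real.sqrt (1 - u t ^ 2))^2 = 1 - u t ^ 2 := Real.sq_sqrt (by nlinarith [hu_ub t ht, hu_pos t])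
    have hXsq : X t ^ 2 < 1 := by
      have h1 : X t ^ 2 = k^2 * (1 - u t ^2) / (1 + u t)^2 := by
        simp only [hX_def]; rw [mul_pow, div_pow, hsq]; ring
      rw [h1, hk2]
      rw [div_lt_one (by positivity)]
      have := hu_lb t; have := hu_ub t ht; have := hden_pos t
      rw [div_mul_eq_mul_div, div_lt_iff₀ hd]
      nlinarith
    nlinarith [hX_nonneg t]
  -- continuity of F on Icc 0 s
  have hu_cont : Continuous u :=
    continuous_const.add (continuous_const.mul (Real.continuous_exp.comp continuous_neg))
  have hFcont : ContinuousOn F (Set.Icc 0 s) := by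
    have hXc : Continuous X := by
      simp only [hX_def]
      apply Continuous.mul continuous_const
      apply Continuous.div
      · exact Real.continuous_sqrt.comp (continuous_const.sub (hu_cont.pow 2))
      · exact continuous_const.add hu_cont
      · intro t; exact (hden_pos t).ne'
    have harc : ContinuousOn (fun t => Real.arccos (u t)) (Set.Icc 0 s) :=
      (Real.continuous_arccos.comp hu_cont).continuousOn
    apply harc.add
    apply ContinuousOn.mul continuousOn_const
    have hfrac : ContinuousOn (fun t => (1 + X t) / (1 - X t)) (Set.Icc 0 s) := by
      apply ContinuousOn.div
      · exact (continuous_const.add hXc).continuousOn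
      · exact (continuous_const.sub hXc).continuousOn
      · intro t ht
        have := hX_lt1 t ht.1
        intro hcon; rw [sub_eq_zero] at hcon; linarith
    have hlogc : ContinuousOn (fun t => Real.log ((1 + X t) / (1 - X t))) (Set.Icc 0 s) := by
      apply ContinuousOn.log hfrac
      intro t ht
      have h1 := hX_nonneg t
      have h2 := hX_lt1 t ht.1
      have : 0 < (1 + X t) / (1 - X t) := by
        apply div_pos <;> linarith
      exact this.ne'
    exact hlogc.div_const 2
  -- derivative of F on Ioo 0 s
  have hF' : ∀ t ∈ Set.Ioo (0:ℝ) s, HasDerivAt F (f t) t := by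
    intro t ht
    have htpos : 0 < t := ht.1
    have he_pos := Real.exp_pos (-t)
    have hu1 : u t < 1 := hu_lt1 t htpos
    have hu2 := hu_lb t
    have hu0 := hu_pos t
    have h1u2 : 0 < 1 - u t ^ 2 := by nlinarith
    set w : ℝ := Real.sqrt (1 - u t ^ 2) with hw_def
    have hw0 : 0 < w := Real.sqrt_pos.2 h1u2
    have hw2 : w^2 = 1 - u t ^ 2 := Real.sq_sqrt h1u2.le
    have hu' : HasDerivAt u (-((1-2*H) * Real.exp (-t))) t := by
      have h1 : HasDerivAt (fun t : ℝ => Real.exp (-t)) (-Real.exp (-t)) t := by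
        exact ((Real.hasDerivAt_exp (-t)).comp t (hasDerivAt_neg t)).congr_deriv (by ring)
      have := (h1.const_mul (1-2*H)).const_add (2*H)
      simpa [hu_def, mul_comm] using this
    set u' : ℝ := -((1-2*H) * Real.exp (-t)) with hu'_def
    have harccos : HasDerivAt (fun t => Real.arccos (u t)) (-(1 / Real.sqrt (1 - u t ^ 2)) * u') t :=
      (Real.hasDerivAt_arccos (by linarith) (by linarith)).comp t hu'
    have hsq : HasDerivAt (fun t => 1 - u t ^ 2) (-(2 * u t ^ 1 * u')) t :=
      (hu'.pow 2).const_sub 1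
    have hwD : HasDerivAt (fun t => Real.sqrt (1 - u t ^ 2)) (1 / (2 * w) * (-(2 * u t ^ 1 * u'))) t :=
      (Real.hasDerivAt_sqrt h1u2.ne').comp t hsq
    have hdenD : HasDerivAt (fun t => 1 + u t) u' t := hu'.const_add 1
    have hvD := hwD.div hdenD (hden_pos t).ne'
    have hXD : HasDerivAt X (k * ((1 / (2 * w) * (-(2 * u t ^ 1 * u')) * (1 + u t) - w * u') / (1 + u t)^2)) t := by
      simpa [hX_def, hw_def] using hvD.const_mul k
    have hXrange1 : -1 < X t := lt_of_lt_of_le (by norm_num) (hX_nonneg t)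
    have hXrange2 : X t < 1 := hX_lt1 t htpos.le
    have hart := (my_hasDerivAt_artanh hXrange1 hXrange2).comp t hXD
    have hFD := harccos.add (hart.const_mul (4*H/m))
    have hXval : X t = k * (w / (1 + u t)) := by simp [hX_def, hw_def]
    -- value of the artanh-part derivative
    have hu'val : u' = -(u t - 2*H) := by
      simp only [hu'_def, hu_def]; ring
    have hkm' : k * (1 - 2*H) = m := by
      have : m * m = (1-2*H) * (1+2*H) := by nlinarith [hm2]
      nlinarith [hkm, hm0]
    have hne1 : (1 + u t) ≠ 0 := (hden_pos t).ne'
    have hne2 : u t - 2*H ≠ 0 := by linarith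
    have h1X2 : 1 - (k * (w / (1 + u t)))^2 = 2 * (u t - 2*H) / ((1 - 2*H) * (1 + u t)) := by
      rw [mul_pow, div_pow, hw2, hk2]
      field_simp [hne1, hd.ne']
      ring
    have hAval : 1 / (1 - X t ^ 2) * (k * ((1 / (2 * w) * -(2 * u t ^ 1 * u') * (1 + u t) - w * u') / (1 + u t) ^ 2)) = m / (2 * w) := by
      rw [hXval, h1X2, hu'val]
      exact algA (u t) w k (2*H) (1-2*H) m hw0.ne' hne1 hne2 hd.ne' hw2 hkm'
    refine hFD.congr_deriv ?_
    symm
    rw [hAval]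
    simp only [hf_def]
    rw [← hw_def, hu'val]
    exact (algB (u t) w m H hw0.ne' hm0.ne').symm
  -- nonnegativity
  have hf_nonneg : ∀ t ∈ Set.Ioo (0:ℝ) s, 0 ≤ f t := by
    intro t ht
    simp only [hf_def]
    have := (hu_pos t).le
    positivity
  have hint : IntegrableOn f (Set.Ioc 0 s) :=
    intervalIntegral.integrableOn_deriv_of_nonneg hFcont hF' hf_nonneg
  have hfeq : ∀ t : ℝ, f t = (2 * H + (1 - 2 * H) * Real.exp (-t)) /
      Real.sqrt (1 - (2 * H + (1 - 2 * H) * Real.exp (-t)) ^ 2) := by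
    intro t; simp [hf_def, hu_def]
  constructor
  · exact hint.congr_fun (fun t _ => (hfeq t).symm) measurableSet_Ioc
  -- value
  have hFTC : ∫ y in (0:ℝ)..s, f y = F s - F 0 :=
    intervalIntegral.integral_eq_sub_of_hasDeriv_right_of_le hs.le hFcont
      (fun x hx => (hF' x hx).hasDerivWithinAt)
      ((intervalIntegrable_iff_integrableOn_Ioc_of_le hs.le).2 hint)
  have hIoc : ∫ t in Set.Ioc (0:ℝ) s, f t = F s - F 0 := by
    rw [← intervalIntegral.integral_of_le hs.le]; exact hFTC
  have hF0 : F 0 = 0 := by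
    have hu0 : u 0 = 1 := by simp [hu_def]
    have hX0 : X 0 = 0 := by simp [hX_def, hu0]
    simp [hF_def, hu0, hX0, Real.arccos_one, _root_.artanh]
  -- identify F s with the RHS
  have hus : u s = (1 - 2 * H) * Real.exp (-s) + 2 * H := by simp [hu_def]; ring
  have hθ' : θ = Real.arccos (u s) := by rw [hθ, hus]
  have hus1 : u s < 1 := hu_lt1 s hs
  have hus0 : 0 < u s := hu_pos s
  have hθpos : 0 < θ := by
    rw [hθ']; exact Real.arccos_pos.2 hus1
  have hθlt : θ < π / 2 := by
    rw [hθ']; exact Real.arccos_lt_pi_div_two.2 hus0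
  have hcoshalf : Real.cos (θ/2) ≠ 0 := by
    apply ne_of_gt
    apply Real.cos_pos_of_mem_Ioo
    constructor <;> [linarith [Real.pi_pos]; linarith [Real.pi_pos]]
  have htan : Real.tan (θ/2) = Real.sqrt (1 - u s ^ 2) / (1 + u s) := by
    rw [my_tan_half_eq hcoshalf, hθ', Real.sin_arccos,
      Real.cos_arccos (by linarith) hus1.le]
  have hFs : F s = θ + (4 * H / m) * _root_.artanh (k * Real.tan (θ / 2)) := by
    simp only [hF_def, hX_def]
    rw [htan, ← hθ']
  have : (∫ t in Set.Ioc (0:ℝ) s,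
        (2 * H + (1 - 2 * H) * Real.exp (-t)) /
          Real.sqrt (1 - (2 * H + (1 - 2 * H) * Real.exp (-t)) ^ 2)) =
      ∫ t in Set.Ioc (0:ℝ) s, f t := by
    apply setIntegral_congr_fun measurableSet_Ioc
    intro t _; exact (hfeq t).symm
  rw [this, hIoc, hF0, hFs]
  ring
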